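/- The function t ↦ 1 - ((t-1)/t)^t - ((t-1)/t)^{t-1} is increasing on [1, ∞); in particular, for all integers n ≥ 2, 1 - ((n-1)/n)^n - ((n-1)/n)^{n-1} ≥ 1/4. -/

import Mathlib

open Real Set Filter Topology

private lemma ib_logA_mono :
    StrictMonoOn (fun s : ℝ => Real.log (1 + s) - 2 * s / (2 + s)) (Set.Ici 0) := by
  apply strictMonoOn_of_deriv_pos (convex_Ici 0)
  · apply ContinuousOn.sub
    · apply ContinuousOn.log (by fun_prop)
      intro s hs; simp only [mem_Ici] at hs; positivity
    · apply ContinuousOn.div (by fun_prop) (by fun_prop)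
      intro s hs; simp only [mem_Ici] at hs; positivity
  · intro s hs
    rw [interior_Ici, mem_Ioi] at hs
    have h1 : (1 : ℝ) + s ≠ 0 := by positivity
    have h2 : (2 : ℝ) + s ≠ 0 := by positivity
    have hd : HasDerivAt (fun s : ℝ => Real.log (1 + s) - 2 * s / (2 + s))
        (1 / (1 + s) - (2 * (2 + s) - 2 * s * 1) / (2 + s) ^ 2) s := by
      have := (((hasDerivAt_id s).const_add 1).log h1).sub
        ((((hasDerivAt_id s).const_mul 2).div ((hasDerivAt_id s).const_add 2) h2))
      simpa [Pi.sub_def, Pi.div_def] using this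
    rw [hd.deriv]
    rw [div_sub_div _ _ h1 (by positivity), lt_div_iff₀ (by positivity)]
    nlinarith [sq_nonneg s, sq_nonneg (2+s)]

private lemma ib_logA {s : ℝ} (hs : 0 < s) : 2 * s / (2 + s) < Real.log (1 + s) := by
  have := ib_logA_mono (Set.self_mem_Ici) (le_of_lt hs : (0:ℝ) ≤ s) hs
  simp at this
  linarith

private noncomputable def ibF : ℝ → ℝ :=
  fun t => 1 - ((t - 1) / t) ^ t - ((t - 1) / t) ^ (t - 1)

private lemma ib_hasDerivAtF {t : ℝ} (ht : 1 < t) :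
    HasDerivAt ibF
      (-(((t-1)/t) ^ t * ((Real.log (t-1) - Real.log t) + 1/(t-1)))
       - ((t-1)/t) ^ (t-1) * ((Real.log (t-1) - Real.log t) + 1/t)) t := by
  have ht0 : (0:ℝ) < t := by linarith
  have ht1 : (0:ℝ) < t - 1 := by linarith
  set L : ℝ → ℝ := fun s => Real.log (s - 1) - Real.log s with hL
  have hLd : HasDerivAt L (1/(t-1) - 1/t) t := by
    have h1 : HasDerivAt (fun s : ℝ => Real.log (s - 1)) (1/(t-1)) t := by
      simpa using (((hasDerivAt_id t).sub_const 1).log ht1.ne')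
    have h2 : HasDerivAt (fun s : ℝ => Real.log s) (1/t) t := by
      simpa using (hasDerivAt_id t).log ht0.ne'
    exact h1.sub h2
  have hg : HasDerivAt (fun s : ℝ => Real.exp (s * L s))
      (Real.exp (t * L t) * (1 * L t + t * (1/(t-1) - 1/t))) t :=
    ((hasDerivAt_id t).mul hLd).exp
  have hh : HasDerivAt (fun s : ℝ => Real.exp ((s - 1) * L s))
      (Real.exp ((t-1) * L t) * (1 * L t + (t-1) * (1/(t-1) - 1/t))) t :=
    (((hasDerivAt_id t).sub_const 1).mul hLd).exp
  have heq : ∀ᶠ s in 𝓝 t, ibF s = 1 - Real.exp (s * L s) - Real.exp ((s - 1) * L s) := by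
    filter_upwards [eventually_gt_nhds ht] with s hs
    have hs0 : (0:ℝ) < s := by linarith
    have hx : (0:ℝ) < (s - 1) / s := div_pos (by linarith) hs0
    rw [ibF, Real.rpow_def_of_pos hx, Real.rpow_def_of_pos hx,
      Real.log_div (by linarith) hs0.ne', hL]
    ring_nf
  have hF : HasDerivAt ibF
      (0 - Real.exp (t * L t) * (1 * L t + t * (1/(t-1) - 1/t))
         - Real.exp ((t-1) * L t) * (1 * L t + (t-1) * (1/(t-1) - 1/t))) t := by
    exact HasDerivAt.congr_of_eventuallyEq
      (((hasDerivAt_const t (1:ℝ)).sub hg).sub hh) heq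
  have hx : (0:ℝ) < (t - 1) / t := div_pos ht1 ht0
  have e1 : Real.exp (t * L t) = ((t-1)/t) ^ t := by
    rw [Real.rpow_def_of_pos hx, Real.log_div ht1.ne' ht0.ne']
    congr 1; simp only [hL]; ring
  have e2 : Real.exp ((t-1) * L t) = ((t-1)/t) ^ (t-1) := by
    rw [Real.rpow_def_of_pos hx, Real.log_div ht1.ne' ht0.ne']
    congr 1; simp only [hL]; ring
  convert hF using 1
  rw [e1, e2, hL]
  have : t * (1/(t-1) - 1/t) = 1/(t-1) := by field_simp; ring
  have h2 : (t-1) * (1/(t-1) - 1/t) = 1/t := by field_simp; ring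
  rw [this, h2]; ring

private lemma ib_deriv_pos {t : ℝ} (ht : 1 < t) :
    0 < -(((t-1)/t) ^ t * ((Real.log (t-1) - Real.log t) + 1/(t-1)))
       - ((t-1)/t) ^ (t-1) * ((Real.log (t-1) - Real.log t) + 1/t) := by
  have ht0 : (0:ℝ) < t := by linarith
  have ht1 : (0:ℝ) < t - 1 := by linarith
  have hx : (0:ℝ) < (t - 1) / t := div_pos ht1 ht0
  set L := Real.log (t-1) - Real.log t with hL
  have h2t : (0:ℝ) < 2*t - 1 := by linarith
  have key : 2 < (2*t - 1) * (-L) := by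
    have hs : (0:ℝ) < 1/(t-1) := by positivity
    have h1 : (1:ℝ) + 1/(t-1) = t/(t-1) := by field_simp; ring
    have h2 : 2 * (1/(t-1)) / (2 + 1/(t-1)) = 2 / (2*t-1) := by
      rw [div_eq_div_iff (by positivity) h2t.ne']
      field_simp; ring
    have := ib_logA hs
    rw [h1, h2] at this
    have hlog : Real.log (t/(t-1)) = -L := by
      rw [hL, Real.log_div ht0.ne' ht1.ne']; ring
    rw [hlog] at this
    calc 2 = (2*t-1) * (2/(2*t-1)) := by
          rw [mul_comm, div_mul_cancel₀ _ (ne_of_gt h2t)]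
    _ < (2*t-1) * (-L) := mul_lt_mul_of_pos_left this h2t
  have hsplit : ((t-1)/t) ^ t = ((t-1)/t) * ((t-1)/t) ^ (t-1) := by
    rw [show ((t-1)/t) * ((t-1)/t) ^ (t-1) = ((t-1)/t) ^ (1:ℝ) * ((t-1)/t) ^ (t-1) by
        rw [Real.rpow_one], ← Real.rpow_add hx]
    norm_num
  rw [hsplit]
  have hp : (0:ℝ) < ((t-1)/t) ^ (t-1) := Real.rpow_pos_of_pos hx _
  have hb : ((t-1)/t) * (L + 1/(t-1)) + (L + 1/t) < 0 := by
    have e : ((t-1)/t) * (L + 1/(t-1)) + (L + 1/t) = ((2*t-1)/t) * L + 2/t := by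
      field_simp
      ring
    rw [e]
    have : ((2*t-1)/t) * L + 2/t = (1/t) * ((2*t-1) * L + 2) := by field_simp
    rw [this]
    apply mul_neg_of_pos_of_neg (by positivity)
    nlinarith [key]
  nlinarith [hp, hb, mul_pos hp (neg_pos.2 hb)]

private noncomputable def ibG : ℝ → ℝ :=
  fun t => 1 - (1 + (t - 1) / t) * Real.exp ((t - 1) * (Real.log (t-1) - Real.log t))

private lemma ib_FeqG : Set.EqOn ibF ibG (Set.Ici 1) := by
  intro t ht
  rw [Set.mem_Ici] at ht
  rcases eq_or_lt_of_le ht with h | h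
  · subst h
    show ibF 1 = ibG 1
    norm_num [ibF, ibG, Real.rpow_one]
  · have ht0 : (0:ℝ) < t := by linarith
    have ht1 : (0:ℝ) < t - 1 := by linarith
    have hx : (0:ℝ) < (t - 1) / t := div_pos ht1 ht0
    have e2 : ((t-1)/t) ^ (t-1) = Real.exp ((t - 1) * (Real.log (t-1) - Real.log t)) := by
      rw [Real.rpow_def_of_pos hx, Real.log_div ht1.ne' ht0.ne']
      ring_nf
    have e1 : ((t-1)/t) ^ t = ((t-1)/t) * ((t-1)/t) ^ (t-1) := by
      rw [show ((t-1)/t) * ((t-1)/t) ^ (t-1) = ((t-1)/t) ^ (1:ℝ) * ((t-1)/t) ^ (t-1) by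
          rw [Real.rpow_one], ← Real.rpow_add hx]
      norm_num
    simp only [ibF, ibG, e1, e2]
    ring

private lemma ib_contG : ContinuousOn ibG (Set.Ici 1) := by
  have hmain : ContinuousOn (fun t : ℝ => (t - 1) * (Real.log (t-1) - Real.log t))
      (Set.Ici 1) := by
    intro t ht
    rw [Set.mem_Ici] at ht
    rcases eq_or_lt_of_le ht with h | h
    · subst h
      have hval : ((1:ℝ) - 1) * (Real.log (1-1) - Real.log 1) = 0 := by norm_num
      rw [ContinuousWithinAt, hval,
        show Set.Ici (1:ℝ) = insert 1 (Set.Ioi 1) from Set.Ioi_insert.symm,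
        nhdsWithin_insert]
      rw [Filter.tendsto_sup]
      constructor
      · rw [tendsto_pure_left]
        intro s hs
        have : ((fun t : ℝ => (t - 1) * (Real.log (t-1) - Real.log t)) 1) ∈ s := by
          simpa [hval] using mem_of_mem_nhds hs
        simpa using this
      · have hsub : Filter.Tendsto (fun t : ℝ => t - 1) (𝓝[>] 1) (𝓝[>] 0) := by
          apply tendsto_nhdsWithin_of_tendsto_nhds_of_eventually_within
          · have h := (continuous_sub_right (1:ℝ)).tendsto (1:ℝ)
            norm_num at h
            exact (h.mono_left nhdsWithin_le_nhds : )
          · filter_upwards [self_mem_nhdsWithin] with t ht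
            simp only [Set.mem_Ioi] at *; linarith
        have h1 : Filter.Tendsto (fun t : ℝ => Real.log (t - 1) * (t - 1)) (𝓝[>] 1) (𝓝 0) := by
          have := tendsto_log_mul_rpow_nhdsGT_zero (r := 1) one_pos
          simp only [Real.rpow_one] at this
          exact this.comp hsub
        have h2 : Filter.Tendsto (fun t : ℝ => (t - 1) * Real.log t) (𝓝[>] 1) (𝓝 0) := by
          have : Filter.Tendsto (fun t : ℝ => (t - 1) * Real.log t) (𝓝 (1:ℝ)) (𝓝 0) := by
            have hc : ContinuousAt (fun t : ℝ => (t - 1) * Real.log t) 1 :=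
              (by fun_prop : ContinuousAt (fun t : ℝ => t - 1) 1).mul
                (Real.continuousAt_log one_ne_zero)
            simpa using hc.tendsto
          exact this.mono_left nhdsWithin_le_nhds
        have := h1.sub h2
        simp only [sub_zero] at this
        apply this.congr' ?_ |>.mono_right (le_refl _)
        · filter_upwards with t
          ring
    · exact (ContinuousAt.continuousWithinAt (by
        have h1 : ContinuousAt (fun t : ℝ => Real.log (t - 1)) t :=
          (Real.continuousAt_log (by linarith)).comp (by fun_prop)
        have h2 : ContinuousAt (fun t : ℝ => Real.log t) t :=
          Real.continuousAt_log (by positivity)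
        fun_prop))
  apply ContinuousOn.sub continuousOn_const
  apply ContinuousOn.mul
  · apply ContinuousOn.add continuousOn_const
    apply ContinuousOn.div (by fun_prop) (by fun_prop)
    intro t ht; rw [Set.mem_Ici] at ht; positivity
  · exact Real.continuous_exp.comp_continuousOn hmain

private lemma ib_strictMono : StrictMonoOn ibF (Set.Ici 1) := by
  apply strictMonoOn_of_deriv_pos (convex_Ici 1)
  · exact ib_contG.congr ib_FeqG
  · intro t ht
    rw [interior_Ici, mem_Ioi] at ht
    rw [(ib_hasDerivAtF ht).deriv]
    exact ib_deriv_pos ht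

/-- The function t ↦ 1 - ((t-1)/t)^t - ((t-1)/t)^{t-1} is increasing on [1, ∞);
in particular for all integers n ≥ 2, 1 - ((n-1)/n)^n - ((n-1)/n)^{n-1} ≥ 1/4. -/
theorem increasing_binomial_aux :
    StrictMonoOn (fun t : ℝ => 1 - ((t - 1) / t) ^ t - ((t - 1) / t) ^ (t - 1))
      (Set.Ici (1 : ℝ)) ∧
    ∀ n : ℕ, 2 ≤ n →
      (1 : ℝ) / 4 ≤ 1 - (((n : ℝ) - 1) / n) ^ n - (((n : ℝ) - 1) / n) ^ (n - 1) := by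
  constructor
  · exact ib_strictMono
  · intro n hn
    have hn1 : 1 ≤ n := le_trans (by norm_num) hn
    have hn2 : (2:ℝ) ≤ (n:ℝ) := by exact_mod_cast hn
    have hmem2 : (2:ℝ) ∈ Set.Ici (1:ℝ) := by norm_num
    have hmemn : (n:ℝ) ∈ Set.Ici (1:ℝ) := by
      rw [Set.mem_Ici]; linarith
    have hle : ibF 2 ≤ ibF n := ib_strictMono.monotoneOn hmem2 hmemn hn2
    have hF2 : ibF 2 = 1/4 := by
      show 1 - (((2:ℝ) - 1) / 2) ^ (2:ℝ) - (((2:ℝ) - 1) / 2) ^ ((2:ℝ) - 1) = 1/4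
      rw [show (2:ℝ) - 1 = 1 by norm_num, Real.rpow_one,
        show (2:ℝ) = ((2:ℕ):ℝ) by norm_num, Real.rpow_natCast]
      norm_num
    have hFn : ibF n = 1 - (((n : ℝ) - 1) / n) ^ n - (((n : ℝ) - 1) / n) ^ (n - 1) := by
      show 1 - (((n:ℝ) - 1) / n) ^ ((n:ℝ)) - (((n:ℝ) - 1) / n) ^ ((n:ℝ) - 1) = _
      rw [Real.rpow_natCast,
        show (n:ℝ) - 1 = ((n - 1 : ℕ) : ℝ) by rw [Nat.cast_sub hn1, Nat.cast_one],
        Real.rpow_natCast]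
    rw [hF2, hFn] at hle
    exact hle
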